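/- Suppose M1 is positive semidefinite with rank M1 = 1 or rank M1 = 2, and there exists a 3×3 real matrix W with M1·W = B2. Then, with r = rank M1, the sequence β^{(3)} admits an r-atomic representing measure, and it is unique among r-atomic representing measures: any two r-atomic representing measures of β^{(3)} have the same set of atom–weight pairs {((x_k, y_k), ρ_k) : 1 ≤ k ≤ r}. -/

import Mathlib

open Matrix

/-- The moment matrix `M(1)` of a cubic moment sequence. -/
def M1 (β00 β10 β01 β20 β11 β02 : ℝ) : Matrix (Fin 3) (Fin 3) ℝ :=
  !![β00, β10, β01; β10, β20, β11; β01, β11, β02]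

/-- The block `B(2)` of a cubic moment sequence. -/
def B2 (β20 β11 β02 β30 β21 β12 β03 : ℝ) : Matrix (Fin 3) (Fin 3) ℝ :=
  !![β20, β11, β02; β30, β21, β12; β21, β12, β03]

/-- The cubic moment sequence `β^{(3)}` as a function of the indices `(i, j)`,
`i + j ≤ 3`. -/
def cubicMoment (β00 β10 β01 β20 β11 β02 β30 β21 β12 β03 : ℝ) : ℕ → ℕ → ℝ
  | 0, 0 => β00
  | 1, 0 => β10
  | 0, 1 => β01
  | 2, 0 => β20
  | 1, 1 => β11
  | 0, 2 => β02
  | 3, 0 => β30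
  | 2, 1 => β21
  | 1, 2 => β12
  | 0, 3 => β03
  | _, _ => 0

/-- `pt, ρ` is an `r`-atomic representing measure of the cubic sequence `β^{(3)}`. -/
def IsAtomicRep (β00 β10 β01 β20 β11 β02 β30 β21 β12 β03 : ℝ) (r : ℕ)
    (pt : Fin r → ℝ × ℝ) (ρ : Fin r → ℝ) : Prop :=
  Function.Injective pt ∧ (∀ k, 0 < ρ k) ∧
    ∀ i j : ℕ, i + j ≤ 3 →
      cubicMoment β00 β10 β01 β20 β11 β02 β30 β21 β12 β03 i j =
        ∑ k, ρ k * (pt k).1 ^ i * (pt k).2 ^ j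

open Module
section CubicAux

lemma weights_eq (x1 x2 w1 w2 w1' w2' : ℝ) (hne : x1 ≠ x2)
    (e1 : w1' + w2' = w1 + w2) (e2 : w1'*x1 + w2'*x2 = w1*x1 + w2*x2) :
    w1' = w1 ∧ w2' = w2 := by
  have hx : x1 - x2 ≠ 0 := sub_ne_zero.mpr hne
  constructor
  · have h : (w1' - w1)*(x1 - x2) = 0 := by linear_combination e2 - x2*e1
    rcases mul_eq_zero.mp h with h | h
    · linarith
    · exact absurd h hx
  · have h : (w2' - w2)*(x1 - x2) = 0 := by linear_combination x1*e1 - e2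
    rcases mul_eq_zero.mp h with h | h
    · linarith
    · exact absurd h hx

lemma uni_unique (m0 m1 m2 m3 : ℝ) (hd : m0*m2 - m1^2 ≠ 0)
    (x1 x2 w1 w2 x1' x2' w1' w2' : ℝ)
    (hne : x1 ≠ x2) (hne' : x1' ≠ x2')
    (S0 : w1 + w2 = m0) (S1 : w1*x1 + w2*x2 = m1)
    (S2 : w1*x1^2 + w2*x2^2 = m2) (S3 : w1*x1^3 + w2*x2^3 = m3)
    (T0 : w1' + w2' = m0) (T1 : w1'*x1' + w2'*x2' = m1)
    (T2 : w1'*x1'^2 + w2'*x2'^2 = m2) (T3 : w1'*x1'^3 + w2'*x2'^3 = m3) :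
    (x1' = x1 ∧ x2' = x2 ∧ w1' = w1 ∧ w2' = w2) ∨
    (x1' = x2 ∧ x2' = x1 ∧ w1' = w2 ∧ w2' = w1) := by
  have k1 : m2 = (x1+x2)*m1 - (x1*x2)*m0 := by
    rw [← S0, ← S1, ← S2]; ring
  have k2 : m3 = (x1+x2)*m2 - (x1*x2)*m1 := by
    rw [← S1, ← S2, ← S3]; ring
  have k1' : m2 = (x1'+x2')*m1 - (x1'*x2')*m0 := by
    rw [← T0, ← T1, ← T2]; ring
  have k2' : m3 = (x1'+x2')*m2 - (x1'*x2')*m1 := by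
    rw [← T1, ← T2, ← T3]; ring
  have u1 : ((x1+x2) - (x1'+x2'))*m1 - ((x1*x2) - (x1'*x2'))*m0 = 0 := by
    linear_combination k1' - k1
  have u2 : ((x1+x2) - (x1'+x2'))*m2 - ((x1*x2) - (x1'*x2'))*m1 = 0 := by
    linear_combination k2' - k2
  have hF1 : x1' + x2' = x1 + x2 := by
    have h : ((x1+x2) - (x1'+x2'))*(m0*m2 - m1^2) = 0 := by
      linear_combination m0*u2 - m1*u1
    rcases mul_eq_zero.mp h with h | h
    · linarith
    · exact absurd h hd
  have hF2 : x1' * x2' = x1 * x2 := by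
    have u1' : ((x1*x2) - (x1'*x2'))*m0 = 0 := by linear_combination (-m1)*hF1 - u1
    have u2' : ((x1*x2) - (x1'*x2'))*m1 = 0 := by linear_combination (-m2)*hF1 - u2
    by_contra h
    have h' : (x1*x2) - (x1'*x2') ≠ 0 := fun hc => h (by linarith)
    have hm0 : m0 = 0 := by
      rcases mul_eq_zero.mp u1' with h | h
      · exact absurd h h'
      · exact h
    have hm1 : m1 = 0 := by
      rcases mul_eq_zero.mp u2' with h | h
      · exact absurd h h'
      · exact h
    apply hd; rw [hm0, hm1]; ring
  have hr1 : (x1' - x1)*(x1' - x2) = 0 := by linear_combination x1'*hF1 - hF2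
  have hr2 : (x2' - x1)*(x2' - x2) = 0 := by linear_combination x2'*hF1 - hF2
  rcases mul_eq_zero.mp hr1 with h1 | h1 <;> rcases mul_eq_zero.mp hr2 with h2 | h2
  · exfalso; apply hne'; linarith
  · left
    have hx1 : x1' = x1 := by linarith
    have hx2 : x2' = x2 := by linarith
    refine ⟨hx1, hx2, ?_⟩
    rw [hx1, hx2] at T1
    exact weights_eq x1 x2 w1 w2 w1' w2' hne (by linarith) (by linarith)
  · right
    have hx1 : x1' = x2 := by linarith
    have hx2 : x2' = x1 := by linarith
    refine ⟨hx1, hx2, ?_⟩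
    rw [hx1, hx2] at T1
    have := weights_eq x1 x2 w1 w2 w2' w1' hne (by linarith) (by linarith)
    exact ⟨this.2, this.1⟩
  · exfalso; apply hne'; linarith

lemma uni_exists (m0 m1 m2 m3 : ℝ) (hm0 : 0 < m0) (hd : 0 < m0*m2 - m1^2) :
    ∃ x1 x2 w1 w2 : ℝ, x1 ≠ x2 ∧ 0 < w1 ∧ 0 < w2 ∧
      w1 + w2 = m0 ∧ w1*x1 + w2*x2 = m1 ∧ w1*x1^2 + w2*x2^2 = m2 ∧
      w1*x1^3 + w2*x2^3 = m3 := by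
  have hd0 : m0*m2 - m1^2 ≠ 0 := ne_of_gt hd
  obtain ⟨e1, e2, k1, k2, hdisc⟩ :
      ∃ e1 e2 : ℝ, m2 = e1*m1 - e2*m0 ∧ m3 = e1*m2 - e2*m1 ∧ 0 < e1^2 - 4*e2 := by
    refine ⟨(m0*m3 - m1*m2)/(m0*m2 - m1^2), (m1*m3 - m2^2)/(m0*m2 - m1^2), ?_, ?_, ?_⟩
    · rw [div_mul_eq_mul_div, div_mul_eq_mul_div, div_sub_div_same, eq_div_iff hd0]; ring
    · field_simp; ring
    · have k1 : m2 = ((m0*m3 - m1*m2)/(m0*m2 - m1^2))*m1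
          - ((m1*m3 - m2^2)/(m0*m2 - m1^2))*m0 := by
          rw [div_mul_eq_mul_div, div_mul_eq_mul_div, div_sub_div_same, eq_div_iff hd0]; ring
      set E1 := (m0*m3 - m1*m2)/(m0*m2 - m1^2)
      set E2 := (m1*m3 - m2^2)/(m0*m2 - m1^2)
      nlinarith [sq_nonneg (m0*E1 - 2*m1), sq_nonneg m0]
  obtain ⟨x1, x2, hne, hlt, hsum, hprod⟩ :
      ∃ x1 x2 : ℝ, x1 ≠ x2 ∧ x1 < x2 ∧ x1 + x2 = e1 ∧ x1*x2 = e2 := by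
    have hs0 : 0 < Real.sqrt (e1^2 - 4*e2) := Real.sqrt_pos.mpr hdisc
    have hs2 : Real.sqrt (e1^2 - 4*e2)^2 = e1^2 - 4*e2 := Real.sq_sqrt hdisc.le
    refine ⟨(e1 - Real.sqrt (e1^2-4*e2))/2, (e1 + Real.sqrt (e1^2-4*e2))/2,
      by intro h; nlinarith, by nlinarith, by ring, by nlinarith⟩
  have hx : 0 < x2 - x1 := by linarith
  have hx0 : x2 - x1 ≠ 0 := ne_of_gt hx
  obtain ⟨w1, w2, S0, S1⟩ :
      ∃ w1 w2 : ℝ, w1 + w2 = m0 ∧ w1*x1 + w2*x2 = m1 ∧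
        w1 = (m0*x2 - m1)/(x2-x1) ∧ w2 = (m1 - m0*x1)/(x2-x1) := by
    refine ⟨(m0*x2 - m1)/(x2-x1), (m1 - m0*x1)/(x2-x1), by field_simp; ring,
      by field_simp; ring, rfl, rfl⟩
  obtain ⟨S1, hw1e, hw2e⟩ := S1
  have S2 : w1*x1^2 + w2*x2^2 = m2 := by
    have h : w1*x1^2 + w2*x2^2 = (x1+x2)*(w1*x1 + w2*x2) - x1*x2*(w1+w2) := by ring
    rw [h, S0, S1, hsum, hprod]; linarith [k1]
  have S3 : w1*x1^3 + w2*x2^3 = m3 := by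
    have h : w1*x1^3 + w2*x2^3 = (x1+x2)*(w1*x1^2 + w2*x2^2) - x1*x2*(w1*x1+w2*x2) := by ring
    rw [h, S1, S2, hsum, hprod]; linarith [k2]
  have hnum : (m0*x2 - m1)*(m1 - m0*x1) = m0*m2 - m1^2 := by
    linear_combination m0*m1*hsum - m0^2*hprod - m0*k1
  have h2 : 0 < (m0*x2 - m1)*(m1 - m0*x1) := by rw [hnum]; exact hd
  have hA : 0 < m0*x2 - m1 := by
    by_contra hA'
    push_neg at hA'
    have hB : 0 < m1 - m0*x1 := by nlinarith [mul_pos hm0 hx]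
    have := mul_nonpos_of_nonpos_of_nonneg hA' hB.le
    linarith
  have hB : 0 < m1 - m0*x1 := by
    rcases lt_trichotomy (m1 - m0*x1) 0 with h | h | h
    · nlinarith
    · rw [h] at h2; simp at h2
    · exact h
  refine ⟨x1, x2, w1, w2, hne, ?_, ?_, S0, S1, S2, S3⟩
  · rw [hw1e]; positivity
  · rw [hw2e]; positivity

lemma range_fin_two {α : Type*} (f : Fin 2 → α) : Set.range f = {f 0, f 1} := by
  ext a
  simp [Set.range, Fin.exists_fin_two, eq_comm]

lemma plane_exists (β00 β10 β01 β20 β11 β02 β30 β21 β12 β03 p q : ℝ)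
    (hm0 : 0 < β00) (hd : 0 < β00*β20 - β10^2)
    (h1 : β01 = p*β00 + q*β10) (h2 : β11 = p*β10 + q*β20) (h3 : β02 = p*β01 + q*β11)
    (h4 : β21 = p*β20 + q*β30) (h5 : β12 = p*β11 + q*β21) (h6 : β03 = p*β02 + q*β12) :
    ∃ pt w, IsAtomicRep β00 β10 β01 β20 β11 β02 β30 β21 β12 β03 2 pt w := by
  obtain ⟨x1, x2, w1, w2, hne, hw1, hw2, S0, S1, S2, S3⟩ :=
    uni_exists β00 β10 β20 β30 hm0 hd
  refine ⟨![(x1, p+q*x1), (x2, p+q*x2)], ![w1, w2], ?_, ?_, ?_⟩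
  · intro a b hab
    fin_cases a <;> fin_cases b <;> simp_all <;> exact absurd hab.1 hne
  · intro k; fin_cases k <;> simpa
  · intro i j hij
    have hi : i ≤ 3 := by omega
    have hj : j ≤ 3 := by omega
    interval_cases i <;> interval_cases j <;> first
      | (exfalso; omega)
      |
      simp only [cubicMoment, Fin.sum_univ_two, Matrix.cons_val_zero, Matrix.cons_val_one,
        Matrix.head_cons, pow_zero, pow_one, mul_one, one_mul]
    · linarith [S0]
    · linear_combination h1 - p*S0 - q*S1
    · linear_combination h3 + p*h1 + q*h2 - p^2*S0 - 2*p*q*S1 - q^2*S2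
    · linear_combination h6 + p*h3 + q*h5 + p^2*h1 + 2*p*q*h2 + q^2*h4
        - p^3*S0 - 3*p^2*q*S1 - 3*p*q^2*S2 - q^3*S3
    · linarith [S1]
    · linear_combination h2 - p*S1 - q*S2
    · linear_combination h5 + p*h2 + q*h4 - p^2*S1 - 2*p*q*S2 - q^2*S3
    · linarith [S2]
    · linear_combination h4 - p*S2 - q*S3
    · linarith [S3]

lemma plane_unique (β00 β10 β01 β20 β11 β02 β30 β21 β12 β03 p q : ℝ)
    (hd : β00*β20 - β10^2 ≠ 0)
    (pt pt' : Fin 2 → ℝ × ℝ) (w w' : Fin 2 → ℝ)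
    (H : IsAtomicRep β00 β10 β01 β20 β11 β02 β30 β21 β12 β03 2 pt w)
    (H' : IsAtomicRep β00 β10 β01 β20 β11 β02 β30 β21 β12 β03 2 pt' w')
    (hl : ∀ k, (pt k).2 = p + q*(pt k).1)
    (hl' : ∀ k, (pt' k).2 = p + q*(pt' k).1) :
    Set.range (fun k => (pt k, w k)) = Set.range (fun k => (pt' k, w' k)) := by
  obtain ⟨hinj, hpos, hmom⟩ := H
  obtain ⟨hinj', hpos', hmom'⟩ := H'
  have hxne : (pt 0).1 ≠ (pt 1).1 := by
    intro h
    have : pt 0 = pt 1 := Prod.ext h (by rw [hl 0, hl 1, h])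
    exact absurd (hinj this) (by decide)
  have hxne' : (pt' 0).1 ≠ (pt' 1).1 := by
    intro h
    have : pt' 0 = pt' 1 := Prod.ext h (by rw [hl' 0, hl' 1, h])
    exact absurd (hinj' this) (by decide)
  have M0 := hmom 0 0 (by norm_num); have M1 := hmom 1 0 (by norm_num)
  have M2 := hmom 2 0 (by norm_num); have M3 := hmom 3 0 (by norm_num)
  have N0 := hmom' 0 0 (by norm_num); have N1 := hmom' 1 0 (by norm_num)
  have N2 := hmom' 2 0 (by norm_num); have N3 := hmom' 3 0 (by norm_num)
  simp only [cubicMoment, Fin.sum_univ_two, pow_zero, pow_one, mul_one] at M0 M1 M2 M3 N0 N1 N2 N3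
  rcases uni_unique β00 β10 β20 β30 hd (pt 0).1 (pt 1).1 (w 0) (w 1)
      (pt' 0).1 (pt' 1).1 (w' 0) (w' 1) hxne hxne'
      (by linarith) (by linarith) (by linarith) (by linarith)
      (by linarith) (by linarith) (by linarith) (by linarith) with
    ⟨e1, e2, f1, f2⟩ | ⟨e1, e2, f1, f2⟩
  · have p1 : pt' 0 = pt 0 := Prod.ext e1 (by rw [hl' 0, hl 0, e1])
    have p2 : pt' 1 = pt 1 := Prod.ext e2 (by rw [hl' 1, hl 1, e2])
    rw [range_fin_two, range_fin_two, p1, p2, f1, f2]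
  · have p1 : pt' 0 = pt 1 := Prod.ext e1 (by rw [hl' 0, hl 1, e1])
    have p2 : pt' 1 = pt 0 := Prod.ext e2 (by rw [hl' 1, hl 0, e2])
    rw [range_fin_two, range_fin_two, p1, p2, f1, f2, Set.pair_comm]

lemma cubicMoment_swap (β00 β10 β01 β20 β11 β02 β30 β21 β12 β03 : ℝ) (i j : ℕ) :
    cubicMoment β00 β01 β10 β02 β11 β20 β03 β12 β21 β30 i j =
      cubicMoment β00 β10 β01 β20 β11 β02 β30 β21 β12 β03 j i := by
  rcases i with _|_|_|_|i <;> rcases j with _|_|_|_|j <;> rfl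

lemma swap_rep {β00 β10 β01 β20 β11 β02 β30 β21 β12 β03 : ℝ} {r : ℕ}
    {pt : Fin r → ℝ × ℝ} {w : Fin r → ℝ}
    (H : IsAtomicRep β00 β10 β01 β20 β11 β02 β30 β21 β12 β03 r pt w) :
    IsAtomicRep β00 β01 β10 β02 β11 β20 β03 β12 β21 β30 r
      (fun k => ((pt k).2, (pt k).1)) w := by
  obtain ⟨hinj, hpos, hmom⟩ := H
  refine ⟨fun x y hxy => hinj ?_, hpos, fun i j hij => ?_⟩
  · have h1 := congrArg Prod.fst hxy
    have h2 := congrArg Prod.snd hxy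
    exact Prod.ext h2 h1
  · rw [cubicMoment_swap, hmom j i (by omega)]
    exact Finset.sum_congr rfl fun k _ => by ring

lemma rank_le_one_of_cols (A : Matrix (Fin 3) (Fin 3) ℝ) (v : Fin 3 → ℝ)
    (h : ∀ j, Aᵀ j ∈ Submodule.span ℝ {v}) : A.rank ≤ 1 := by
  have hle : Submodule.span ℝ (Set.range Aᵀ) ≤ Submodule.span ℝ {v} :=
    Submodule.span_le.mpr (by rintro _ ⟨j, rfl⟩; exact h j)
  rcases eq_or_ne v 0 with rfl | hv
  · have hbot : Submodule.span ℝ (Set.range Aᵀ) = ⊥ := le_bot_iff.mp (by simpa using hle)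
    rw [Matrix.rank_eq_finrank_span_cols, show Set.range A.col = Set.range Aᵀ from rfl, hbot]
    simp
  · calc A.rank = finrank ℝ (Submodule.span ℝ (Set.range Aᵀ)) :=
          Matrix.rank_eq_finrank_span_cols A
      _ ≤ finrank ℝ (Submodule.span ℝ {v}) := Submodule.finrank_mono hle
      _ = 1 := finrank_span_singleton hv

set_option maxHeartbeats 1000000 in
lemma main_rank2 (β00 β10 β01 β20 β11 β02 β30 β21 β12 β03 : ℝ) (hβ00 : 0 < β00)
    (hpsd : (M1 β00 β10 β01 β20 β11 β02).PosSemidef)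
    (h2r : (M1 β00 β10 β01 β20 β11 β02).rank = 2)
    (W : Matrix (Fin 3) (Fin 3) ℝ)
    (hW : M1 β00 β10 β01 β20 β11 β02 * W = B2 β20 β11 β02 β30 β21 β12 β03) :
    (∃ (pt : Fin 2 → ℝ × ℝ) (w : Fin 2 → ℝ),
        IsAtomicRep β00 β10 β01 β20 β11 β02 β30 β21 β12 β03 2 pt w) ∧
      ∀ (pt pt' : Fin 2 → ℝ × ℝ) (w w' : Fin 2 → ℝ),
        IsAtomicRep β00 β10 β01 β20 β11 β02 β30 β21 β12 β03 2 pt w →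
        IsAtomicRep β00 β10 β01 β20 β11 β02 β30 β21 β12 β03 2 pt' w' →
        Set.range (fun k => (pt k, w k)) = Set.range (fun k => (pt' k, w' k)) := by
  have hdet : (M1 β00 β10 β01 β20 β11 β02).det = 0 := by
    by_contra h
    have h3 := Matrix.rank_of_isUnit (M1 β00 β10 β01 β20 β11 β02)
      ((Matrix.isUnit_iff_isUnit_det _).mpr (isUnit_iff_ne_zero.mpr h))
    rw [Fintype.card_fin] at h3
    omega
  obtain ⟨u, hu0, hu⟩ := Matrix.exists_mulVec_eq_zero_iff.mpr hdet
  have R0 := congrFun hu 0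
  have R1 := congrFun hu 1
  have R2 := congrFun hu 2
  simp [M1, Matrix.mulVec, dotProduct, Fin.sum_univ_three] at R0 R1 R2
  have EW : ∀ i j : Fin 3, (M1 β00 β10 β01 β20 β11 β02 * W) i j
      = B2 β20 β11 β02 β30 β21 β12 β03 i j := fun i j => by rw [hW]
  have E00 := EW 0 0; have E10 := EW 1 0; have E20 := EW 2 0
  have E01 := EW 0 1; have E11 := EW 1 1; have E21 := EW 2 1
  have E02 := EW 0 2; have E12 := EW 1 2; have E22 := EW 2 2
  simp [M1, B2, Matrix.mul_apply, Fin.sum_univ_three] at E00 E10 E20 E01 E11 E21 E02 E12 E22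
  have C0 : β20 * u 0 + β30 * u 1 + β21 * u 2 = 0 := by
    linear_combination (W 0 0)*R0 + (W 1 0)*R1 + (W 2 0)*R2
      - (u 0)*E00 - (u 1)*E10 - (u 2)*E20
  have C1 : β11 * u 0 + β21 * u 1 + β12 * u 2 = 0 := by
    linear_combination (W 0 1)*R0 + (W 1 1)*R1 + (W 2 1)*R2
      - (u 0)*E01 - (u 1)*E11 - (u 2)*E21
  have C2 : β02 * u 0 + β12 * u 1 + β03 * u 2 = 0 := by
    linear_combination (W 0 2)*R0 + (W 1 2)*R1 + (W 2 2)*R2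
      - (u 0)*E02 - (u 1)*E12 - (u 2)*E22
  -- every 2-atomic representing measure is supported on the line u0 + u1 x + u2 y = 0
  have honline : ∀ (pt : Fin 2 → ℝ × ℝ) (w : Fin 2 → ℝ),
      IsAtomicRep β00 β10 β01 β20 β11 β02 β30 β21 β12 β03 2 pt w →
      ∀ k, u 0 + u 1*(pt k).1 + u 2*(pt k).2 = 0 := by
    rintro pt w ⟨_, hpos, hmom⟩
    have M00 := hmom 0 0 (by norm_num); have M10 := hmom 1 0 (by norm_num)
    have M01 := hmom 0 1 (by norm_num); have M20 := hmom 2 0 (by norm_num)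
    have M11 := hmom 1 1 (by norm_num); have M02 := hmom 0 2 (by norm_num)
    simp only [cubicMoment, Fin.sum_univ_two, pow_zero, pow_one, mul_one, one_mul]
      at M00 M10 M01 M20 M11 M02
    have hz : w 0 * (u 0 + u 1*(pt 0).1 + u 2*(pt 0).2)^2
        + w 1 * (u 0 + u 1*(pt 1).1 + u 2*(pt 1).2)^2 = 0 := by
      linear_combination (u 0)*R0 + (u 1)*R1 + (u 2)*R2 - (u 0)^2*M00
        - 2*(u 0)*(u 1)*M10 - 2*(u 0)*(u 2)*M01 - (u 1)^2*M20
        - 2*(u 1)*(u 2)*M11 - (u 2)^2*M02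
    have h0 : 0 ≤ w 0 * (u 0 + u 1*(pt 0).1 + u 2*(pt 0).2)^2 :=
      mul_nonneg (hpos 0).le (sq_nonneg _)
    have h1 : 0 ≤ w 1 * (u 0 + u 1*(pt 1).1 + u 2*(pt 1).2)^2 :=
      mul_nonneg (hpos 1).le (sq_nonneg _)
    have q0 : u 0 + u 1*(pt 0).1 + u 2*(pt 0).2 = 0 := by
      have hq : w 0 * (u 0 + u 1*(pt 0).1 + u 2*(pt 0).2)^2 = 0 := by linarith
      have := (mul_eq_zero.mp hq).resolve_left (ne_of_gt (hpos 0))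
      exact (pow_eq_zero_iff (by norm_num : (2:ℕ) ≠ 0)).mp this
    have q1 : u 0 + u 1*(pt 1).1 + u 2*(pt 1).2 = 0 := by
      have hq : w 1 * (u 0 + u 1*(pt 1).1 + u 2*(pt 1).2)^2 = 0 := by linarith
      have := (mul_eq_zero.mp hq).resolve_left (ne_of_gt (hpos 1))
      exact (pow_eq_zero_iff (by norm_num : (2:ℕ) ≠ 0)).mp this
    intro k
    fin_cases k
    · exact q0
    · exact q1
  rcases eq_or_ne (u 2) 0 with hc | hc
  · -- u 2 = 0 : vertical line case
    rcases eq_or_ne (u 1) 0 with hb | hb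
    · exfalso
      have ha : u 0 ≠ 0 := by
        intro ha
        apply hu0
        funext i
        fin_cases i
        · exact ha
        · exact hb
        · exact hc
      rw [hb, hc] at R0
      simp at R0
      rcases R0 with h | h
      · exact absurd h (ne_of_gt hβ00)
      · exact absurd h ha
    · rw [hc] at R0 R1 R2 C0 C1 C2
      simp only [mul_zero, add_zero] at R0 R1 R2 C0 C1 C2
      have hd2ge : 0 ≤ β00*β02 - β01^2 := by
        have h := (Matrix.posSemidef_iff_dotProduct_mulVec.mp hpsd).2 ![β01, 0, -β00]
        simp [M1, Matrix.mulVec, dotProduct, Fin.sum_univ_three] at h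
        nlinarith [h]
      have hd2 : 0 < β00*β02 - β01^2 := by
        rcases lt_or_eq_of_le hd2ge with h | h
        · exact h
        exfalso
        have hv0 : (M1 β00 β10 β01 β20 β11 β02) *ᵥ ![β01, 0, -β00] = 0 := by
          apply (hpsd.dotProduct_mulVec_zero_iff _).mp
          show star ![β01, 0, -β00] ⬝ᵥ _ = 0
          simp [M1, Matrix.mulVec, dotProduct, Fin.sum_univ_three]
          nlinarith [h]
        have K0 := congrFun hv0 0
        have K1 := congrFun hv0 1
        have K2 := congrFun hv0 2
        simp [M1, Matrix.mulVec, dotProduct, Fin.sum_univ_three] at K0 K1 K2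
        have hrle := rank_le_one_of_cols (M1 β00 β10 β01 β20 β11 β02)
          ((M1 β00 β10 β01 β20 β11 β02)ᵀ 0) ?_
        · rw [h2r] at hrle; omega
        intro j
        fin_cases j
        · exact Submodule.mem_span_singleton_self _
        · refine Submodule.mem_span_singleton.mpr ⟨-(u 0)/u 1, ?_⟩
          funext i
          simp only [Pi.smul_apply, smul_eq_mul, Matrix.transpose_apply]
          fin_cases i <;> simp [M1] <;> field_simp <;>
            first
              | linear_combination R0 | linear_combination -R0
              | linear_combination R1 | linear_combination -R1
              | linear_combination R2 | linear_combination -R2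
        · refine Submodule.mem_span_singleton.mpr ⟨β01/β00, ?_⟩
          funext i
          simp only [Pi.smul_apply, smul_eq_mul, Matrix.transpose_apply]
          fin_cases i <;> simp [M1] <;> field_simp <;>
            first
              | linear_combination K0 | linear_combination -K0
              | linear_combination K1 | linear_combination -K1
              | linear_combination K2 | linear_combination -K2
      constructor
      · -- existence via swapped plane_exists
        have key2 : ∀ x y : ℝ, x*u 0 + y*u 1 = 0 → y = -(u 0/u 1)*x := by
          intro x y hxy
          rw [show -(u 0/u 1)*x = (-(u 0*x))/u 1 by ring, eq_div_iff hb]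
          linear_combination hxy
        obtain ⟨pt, w, Hσ⟩ := plane_exists β00 β01 β10 β02 β11 β20 β03 β12 β21 β30
          (-(u 0/u 1)) 0 hβ00 hd2
          (by rw [key2 β00 β10 R0]; ring)
          (by rw [key2 β01 β11 R2]; ring)
          (by rw [key2 β10 β20 R1]; ring)
          (by rw [key2 β02 β12 C2]; ring)
          (by rw [key2 β11 β21 C1]; ring)
          (by rw [key2 β20 β30 C0]; ring)
        exact ⟨_, _, swap_rep Hσ⟩
      · intro pt pt' w w' H H'
        have hg : Function.Injective (fun z : (ℝ×ℝ)×ℝ => (((z.1).2, (z.1).1), z.2)) := by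
          intro z z' hz
          have h1 := congrArg (fun y : (ℝ×ℝ)×ℝ => y.1.1) hz
          have h2 := congrArg (fun y : (ℝ×ℝ)×ℝ => y.1.2) hz
          have h3 := congrArg (fun y : (ℝ×ℝ)×ℝ => y.2) hz
          simp only at h1 h2 h3
          exact Prod.ext (Prod.ext h2 h1) h3
        apply Set.image_injective.mpr hg
        rw [← Set.range_comp, ← Set.range_comp]
        refine plane_unique β00 β01 β10 β02 β11 β20 β03 β12 β21 β30
          (-(u 0/u 1)) 0 hd2.ne' _ _ _ _ (swap_rep H) (swap_rep H') ?_ ?_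
        · intro k
          have := honline pt w H k
          rw [hc] at this
          show (pt k).1 = -(u 0/u 1) + 0*(pt k).2
          rw [show -(u 0/u 1) + 0*(pt k).2 = (-(u 0))/u 1 by ring, eq_div_iff hb]
          linear_combination this
        · intro k
          have := honline pt' w' H' k
          rw [hc] at this
          show (pt' k).1 = -(u 0/u 1) + 0*(pt' k).2
          rw [show -(u 0/u 1) + 0*(pt' k).2 = (-(u 0))/u 1 by ring, eq_div_iff hb]
          linear_combination this
  · -- u 2 ≠ 0 : line y = p + q x
    have hd2ge : 0 ≤ β00*β20 - β10^2 := by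
      have h := (Matrix.posSemidef_iff_dotProduct_mulVec.mp hpsd).2 ![β10, -β00, 0]
      simp [M1, Matrix.mulVec, dotProduct, Fin.sum_univ_three] at h
      nlinarith [h]
    have hd2 : 0 < β00*β20 - β10^2 := by
      rcases lt_or_eq_of_le hd2ge with h | h
      · exact h
      exfalso
      have hv0 : (M1 β00 β10 β01 β20 β11 β02) *ᵥ ![β10, -β00, 0] = 0 := by
        apply (hpsd.dotProduct_mulVec_zero_iff _).mp
        show star ![β10, -β00, 0] ⬝ᵥ _ = 0
        simp [M1, Matrix.mulVec, dotProduct, Fin.sum_univ_three]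
        nlinarith [h]
      have K0 := congrFun hv0 0
      have K1 := congrFun hv0 1
      have K2 := congrFun hv0 2
      simp [M1, Matrix.mulVec, dotProduct, Fin.sum_univ_three] at K0 K1 K2
      have hrle := rank_le_one_of_cols (M1 β00 β10 β01 β20 β11 β02)
        ((M1 β00 β10 β01 β20 β11 β02)ᵀ 0) ?_
      · rw [h2r] at hrle; omega
      intro j
      fin_cases j
      · exact Submodule.mem_span_singleton_self _
      · refine Submodule.mem_span_singleton.mpr ⟨β10/β00, ?_⟩
        funext i
        simp only [Pi.smul_apply, smul_eq_mul, Matrix.transpose_apply]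
        fin_cases i <;> simp [M1] <;> field_simp <;>
          first
            | linear_combination K0 | linear_combination -K0
            | linear_combination K1 | linear_combination -K1
            | linear_combination K2 | linear_combination -K2
      · refine Submodule.mem_span_singleton.mpr
          ⟨(-(u 0)*β00 - (u 1)*β10)/(u 2*β00), ?_⟩
        funext i
        simp only [Pi.smul_apply, smul_eq_mul, Matrix.transpose_apply]
        fin_cases i <;> simp [M1] <;> field_simp <;>
          first
            | linear_combination -β00*R0 - (u 1)*K0
            | linear_combination β00*R0 + (u 1)*K0
            | linear_combination -β00*R1 - (u 1)*K1
            | linear_combination β00*R1 + (u 1)*K1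
            | linear_combination -β00*R2 - (u 1)*K2
            | linear_combination β00*R2 + (u 1)*K2
            | linear_combination -β00*R0 + (u 1)*K0
            | linear_combination -β00*R1 + (u 1)*K1
            | linear_combination -β00*R2 + (u 1)*K2
            | linear_combination β00*R0 - (u 1)*K0
            | linear_combination β00*R1 - (u 1)*K1
            | linear_combination β00*R2 - (u 1)*K2
            | linear_combination -R0
    have key : ∀ x y z : ℝ, x*u 0 + y*u 1 + z*u 2 = 0
        → z = -(u 0/u 2)*x + -(u 1/u 2)*y := by
      intro x y z hxyz
      rw [show -(u 0/u 2)*x + -(u 1/u 2)*y = (-(u 0*x) - u 1*y)/u 2 by ring,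
        eq_div_iff hc]
      linear_combination hxyz
    constructor
    · obtain ⟨pt, w, H⟩ := plane_exists β00 β10 β01 β20 β11 β02 β30 β21 β12 β03
        (-(u 0/u 2)) (-(u 1/u 2)) hβ00 hd2
        (key β00 β10 β01 R0) (key β10 β20 β11 R1) (key β01 β11 β02 R2)
        (key β20 β30 β21 C0) (key β11 β21 β12 C1) (key β02 β12 β03 C2)
      exact ⟨pt, w, H⟩
    · intro pt pt' w w' H H'
      refine plane_unique β00 β10 β01 β20 β11 β02 β30 β21 β12 β03
        (-(u 0/u 2)) (-(u 1/u 2)) hd2.ne' pt pt' w w' H H' ?_ ?_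
      · intro k
        have := honline pt w H k
        rw [show -(u 0/u 2) + -(u 1/u 2)*(pt k).1 = (-(u 0) - u 1*(pt k).1)/u 2 by ring,
          eq_div_iff hc]
        linear_combination this
      · intro k
        have := honline pt' w' H' k
        rw [show -(u 0/u 2) + -(u 1/u 2)*(pt' k).1 = (-(u 0) - u 1*(pt' k).1)/u 2 by ring,
          eq_div_iff hc]
        linear_combination this

lemma span_col_eq (A : Matrix (Fin 3) (Fin 3) ℝ) (h1r : A.rank = 1) (h0 : Aᵀ 0 ≠ 0) :
    Submodule.span ℝ {Aᵀ 0} = Submodule.span ℝ (Set.range Aᵀ) := by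
  apply Submodule.eq_of_le_of_finrank_le
    (Submodule.span_mono (Set.singleton_subset_iff.mpr (Set.mem_range_self 0)))
  rw [show Set.range Aᵀ = Set.range A.col from rfl, ← Matrix.rank_eq_finrank_span_cols, h1r, finrank_span_singleton h0]

lemma main_rank1 (β00 β10 β01 β20 β11 β02 β30 β21 β12 β03 : ℝ) (hβ00 : 0 < β00)
    (h1r : (M1 β00 β10 β01 β20 β11 β02).rank = 1)
    (W : Matrix (Fin 3) (Fin 3) ℝ)
    (hW : M1 β00 β10 β01 β20 β11 β02 * W = B2 β20 β11 β02 β30 β21 β12 β03) :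
    (∃ (pt : Fin 1 → ℝ × ℝ) (w : Fin 1 → ℝ),
        IsAtomicRep β00 β10 β01 β20 β11 β02 β30 β21 β12 β03 1 pt w) ∧
      ∀ (pt pt' : Fin 1 → ℝ × ℝ) (w w' : Fin 1 → ℝ),
        IsAtomicRep β00 β10 β01 β20 β11 β02 β30 β21 β12 β03 1 pt w →
        IsAtomicRep β00 β10 β01 β20 β11 β02 β30 β21 β12 β03 1 pt' w' →
        Set.range (fun k => (pt k, w k)) = Set.range (fun k => (pt' k, w' k)) := by
  constructor
  · -- existence
    have h0 : (M1 β00 β10 β01 β20 β11 β02)ᵀ 0 ≠ 0 := by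
      intro h
      have := congrFun h 0
      simp [M1] at this
      exact absurd this (ne_of_gt hβ00)
    have hspan := span_col_eq _ h1r h0
    have hcolM : ∀ j : Fin 3, ∃ t : ℝ,
        t • (M1 β00 β10 β01 β20 β11 β02)ᵀ 0 = (M1 β00 β10 β01 β20 β11 β02)ᵀ j := by
      intro j
      apply Submodule.mem_span_singleton.mp
      rw [hspan]
      exact Submodule.subset_span ⟨j, rfl⟩
    have hcolB : ∀ j : Fin 3, ∃ t : ℝ,
        t • (M1 β00 β10 β01 β20 β11 β02)ᵀ 0 = (B2 β20 β11 β02 β30 β21 β12 β03)ᵀ j := by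
      intro j
      apply Submodule.mem_span_singleton.mp
      rw [hspan, show Set.range (M1 β00 β10 β01 β20 β11 β02)ᵀ = Set.range (M1 β00 β10 β01 β20 β11 β02).col from rfl,
        ← Matrix.range_mulVecLin]
      refine ⟨fun k => W k j, ?_⟩
      funext i
      rw [Matrix.mulVecLin_apply, Matrix.transpose_apply, ← hW]
      simp [Matrix.mul_apply, Matrix.mulVec, dotProduct]
    obtain ⟨t, ht⟩ := hcolM 1
    obtain ⟨s, hs⟩ := hcolM 2
    obtain ⟨l, hl⟩ := hcolB 0
    obtain ⟨n, hn⟩ := hcolB 2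
    have t0 := congrFun ht 0; have t1 := congrFun ht 1; have t2 := congrFun ht 2
    have s0 := congrFun hs 0; have s1 := congrFun hs 1; have s2 := congrFun hs 2
    have l0 := congrFun hl 0; have l1 := congrFun hl 1; have l2 := congrFun hl 2
    have n0 := congrFun hn 0; have n1 := congrFun hn 1; have n2 := congrFun hn 2
    simp only [Pi.smul_apply, smul_eq_mul, Matrix.transpose_apply] at t0 t1 t2 s0 s1 s2 l0 l1 l2 n0 n1 n2
    simp [M1, B2] at t0 t1 t2 s0 s1 s2 l0 l1 l2 n0 n1 n2
    -- t0 : t * β00 = β10, t1 : t * β10 = β20, t2 : t * β01 = β11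
    -- s0 : s * β00 = β01, s1 : s * β10 = β11, s2 : s * β01 = β02
    -- l0 : l * β00 = β20, l1 : l * β10 = β30, l2 : l * β01 = β21
    -- n0 : n * β00 = β02, n1 : n * β10 = β12, n2 : n * β01 = β03
    have hlt : l = t^2 := by
      apply mul_right_cancel₀ (ne_of_gt hβ00)
      linear_combination l0 - t1 - t*t0
    have hns : n = s^2 := by
      apply mul_right_cancel₀ (ne_of_gt hβ00)
      linear_combination n0 - s2 - s*s0
    refine ⟨![(t, s)], ![β00], fun x y _ => Subsingleton.elim x y,
      fun k => by fin_cases k; simpa, ?_⟩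
    intro i j hij
    have hi : i ≤ 3 := by omega
    have hj : j ≤ 3 := by omega
    interval_cases i <;> interval_cases j <;> first
      | (exfalso; omega)
      | (simp only [cubicMoment, Fin.sum_univ_one, Matrix.cons_val_zero, Matrix.cons_val_one,
          Matrix.head_cons, pow_zero, pow_one, mul_one, one_mul])
    · linear_combination -s0
    · linear_combination -s2 - s*s0
    · linear_combination -n2 + β01*hns - s^2*s0
    · linear_combination -t0
    · linear_combination -t2 - t*s0
    · linear_combination -n1 + β10*hns - s^2*t0
    · linear_combination -t1 - t*t0
    · linear_combination -l2 + β01*hlt - t^2*s0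
    · linear_combination -l1 + β10*hlt - t^2*t0
  · -- uniqueness
    intro pt pt' w w' H H'
    have key : ∀ (pt : Fin 1 → ℝ × ℝ) (w : Fin 1 → ℝ),
        IsAtomicRep β00 β10 β01 β20 β11 β02 β30 β21 β12 β03 1 pt w →
        (pt 0, w 0) = ((β10/β00, β01/β00), β00) := by
      rintro pt w ⟨_, _, hmom⟩
      have M00 := hmom 0 0 (by norm_num)
      have M10 := hmom 1 0 (by norm_num)
      have M01 := hmom 0 1 (by norm_num)
      simp only [cubicMoment, Fin.sum_univ_one, pow_zero, pow_one, mul_one, one_mul]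
        at M00 M10 M01
      have hx : (pt 0).1 = β10/β00 := by
        rw [eq_div_iff (ne_of_gt hβ00)]
        linear_combination -M10 + (pt 0).1 * M00
      have hy : (pt 0).2 = β01/β00 := by
        rw [eq_div_iff (ne_of_gt hβ00)]
        linear_combination -M01 + (pt 0).2 * M00
      exact Prod.ext (Prod.ext hx hy) M00.symm
    have e1 := key pt w H
    have e2 := key pt' w' H'
    rw [Set.range_unique, Set.range_unique]
    show ({(pt 0, w 0)} : Set ((ℝ × ℝ) × ℝ)) = {(pt' 0, w' 0)}
    rw [e1, e2]

end CubicAux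

/-- Theorem 3.5: if `M(1) ⪰ 0` with `rank M(1) = 1` or `2` and
`Ran B(2) ⊆ Ran M(1)`, then `β^{(3)}` admits a unique `rank M(1)`-atomic
representing measure. -/
theorem cubic_low_rank_unique_measure
    (β00 β10 β01 β20 β11 β02 β30 β21 β12 β03 : ℝ) (hβ00 : 0 < β00)
    (hpsd : (M1 β00 β10 β01 β20 β11 β02).PosSemidef)
    (hrank : (M1 β00 β10 β01 β20 β11 β02).rank = 1 ∨
             (M1 β00 β10 β01 β20 β11 β02).rank = 2)
    (hW : ∃ W : Matrix (Fin 3) (Fin 3) ℝ,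
        M1 β00 β10 β01 β20 β11 β02 * W = B2 β20 β11 β02 β30 β21 β12 β03) :
    (∃ (pt : Fin (M1 β00 β10 β01 β20 β11 β02).rank → ℝ × ℝ)
        (ρ : Fin (M1 β00 β10 β01 β20 β11 β02).rank → ℝ),
        IsAtomicRep β00 β10 β01 β20 β11 β02 β30 β21 β12 β03
          (M1 β00 β10 β01 β20 β11 β02).rank pt ρ) ∧
      ∀ (pt pt' : Fin (M1 β00 β10 β01 β20 β11 β02).rank → ℝ × ℝ)
        (ρ ρ' : Fin (M1 β00 β10 β01 β20 β11 β02).rank → ℝ),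
        IsAtomicRep β00 β10 β01 β20 β11 β02 β30 β21 β12 β03
          (M1 β00 β10 β01 β20 β11 β02).rank pt ρ →
        IsAtomicRep β00 β10 β01 β20 β11 β02 β30 β21 β12 β03
          (M1 β00 β10 β01 β20 β11 β02).rank pt' ρ' →
        Set.range (fun k => (pt k, ρ k)) = Set.range (fun k => (pt' k, ρ' k)) := by
  
  obtain ⟨W, hW⟩ := hW
  rcases hrank with h | h
  · rw [h]
    exact main_rank1 β00 β10 β01 β20 β11 β02 β30 β21 β12 β03 hβ00 h W hW
  · rw [h]
    exact main_rank2 β00 β10 β01 β20 β11 β02 β30 β21 β12 β03 hβ00 hpsd h W hW
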